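/- Let X₂ be a finite set, and for each x₂ ∈ X₂ let W₀(·|x₂), W₁(·|x₂) be pmfs on a finite set Z with W₁(·|x₂) ≪ W₀(·|x₂). Let P be a pmf on X₂ and α ∈ (0,1]. Define the per-symbol mixture W_α(·|x₂) = α W₁(·|x₂) + (1−α) W₀(·|x₂). Then Σ_{x₂} P(x₂) D(W_α(·|x₂) ‖ W₀(·|x₂)) ≥ (1−√α)·(α²/2)·Σ_{x₂} P(x₂) χ₂(W₁(·|x₂) ‖ W₀(·|x₂)) for all sufficiently small α, uniformly in P. -/

import Mathlib

open Filter Real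

noncomputable def KL {Z : Type*} [Fintype Z] (P Q : Z → ℝ) : ℝ :=
  ∑ z, P z * Real.log (P z / Q z)

noncomputable def chi2 {Z : Type*} [Fintype Z] (P Q : Z → ℝ) : ℝ :=
  ∑ z, (P z - Q z)^2 / Q z

def IsPMF {Z : Type*} [Fintype Z] (P : Z → ℝ) : Prop :=
  (∀ z, 0 ≤ P z) ∧ ∑ z, P z = 1

/-- absolute continuity `P ≪ Q` for pmfs on a finite alphabet -/
def AC {Z : Type*} [Fintype Z] (P Q : Z → ℝ) : Prop := ∀ z, Q z = 0 → P z = 0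

private lemma hasDerivAt_hfun (s x : ℝ) (hx : (-1:ℝ) < x) :
    HasDerivAt (fun u => (1+u) * Real.log (1+u) - u - (1-s)*(u^2/2))
      (Real.log (1+x) - (1-s)*x) x := by
  have h1 : HasDerivAt (fun u : ℝ => 1 + u) 1 x := (hasDerivAt_id x).const_add 1
  have h2 : HasDerivAt (fun u : ℝ => Real.log (1+u)) (1/(1+x)) x := by
    have := (Real.hasDerivAt_log (by linarith : (1:ℝ)+x ≠ 0)).comp x h1
    exact this.congr_deriv (by simp)
  have h3 : HasDerivAt (fun u => (1+u) * Real.log (1+u))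
      (1 * Real.log (1+x) + (1+x) * (1/(1+x))) x := h1.mul h2
  have h4 : HasDerivAt (fun u : ℝ => (1-s)*(u^2/2)) ((1-s)*x) x := by
    have h5 : HasDerivAt (fun u : ℝ => u^2/2) x x := by
      simpa using ((hasDerivAt_pow 2 x).div_const 2)
    simpa using h5.const_mul (1-s)
  have h6 := (h3.sub (hasDerivAt_id x)).sub h4
  have hne : (1:ℝ)+x ≠ 0 := by linarith
  refine h6.congr_deriv ?_
  rw [mul_one_div_cancel hne]; ring

private lemma keyineq {s u : ℝ} (hs0 : 0 < s) (hs1 : s ≤ 1) (hu1 : -s ≤ u) (hu2 : u ≤ s)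
    (hu3 : (-1:ℝ) < u) :
    (1 - s) * (u^2/2) ≤ (1+u) * Real.log (1+u) - u := by
  set h : ℝ → ℝ := fun u => (1+u) * Real.log (1+u) - u - (1-s)*(u^2/2) with hh
  have h0 : h 0 = 0 := by simp [hh]
  suffices H : 0 ≤ h u by
    have : h u = (1+u) * Real.log (1+u) - u - (1-s)*(u^2/2) := rfl
    linarith [this ▸ H]
  rcases le_or_gt 0 u with hpos | hneg
  · have mono : MonotoneOn h (Set.Icc 0 s) := by
      apply monotoneOn_of_deriv_nonneg (convex_Icc 0 s)
      · intro x hx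
        have hx1 : (-1:ℝ) < x := by have := hx.1; linarith
        exact (hasDerivAt_hfun s x hx1).continuousAt.continuousWithinAt
      · intro x hx
        rw [interior_Icc] at hx
        have hx1 : (-1:ℝ) < x := by have := hx.1; linarith
        exact (hasDerivAt_hfun s x hx1).differentiableAt.differentiableWithinAt
      · intro x hx
        rw [interior_Icc] at hx
        obtain ⟨hx0, hxs⟩ := hx
        have hx1 : (-1:ℝ) < x := by linarith
        rw [(hasDerivAt_hfun s x hx1).deriv]
        have hpos1 : (0:ℝ) < 1 + x := by linarith
        have hlog : 1 - (1+x)⁻¹ ≤ Real.log (1+x) :=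
          Real.one_sub_inv_le_log_of_pos hpos1
        have hinv : (1+x) * (1+x)⁻¹ = 1 := mul_inv_cancel₀ (ne_of_gt hpos1)
        nlinarith [hlog, hinv, mul_pos hx0 hs0, mul_pos hx0 (sub_pos.2 hxs)]
    have := mono (Set.mem_Icc.2 ⟨le_refl 0, hs0.le⟩) (Set.mem_Icc.2 ⟨hpos, hu2⟩) hpos
    linarith [h0 ▸ this]
  · have anti : AntitoneOn h (Set.Icc u 0) := by
      apply antitoneOn_of_deriv_nonpos (convex_Icc u 0)
      · intro x hx
        have hx1 : (-1:ℝ) < x := lt_of_lt_of_le hu3 hx.1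
        exact (hasDerivAt_hfun s x hx1).continuousAt.continuousWithinAt
      · intro x hx
        rw [interior_Icc] at hx
        have hx1 : (-1:ℝ) < x := lt_trans hu3 hx.1
        exact (hasDerivAt_hfun s x hx1).differentiableAt.differentiableWithinAt
      · intro x hx
        rw [interior_Icc] at hx
        obtain ⟨hxu, hx0⟩ := hx
        have hx1 : (-1:ℝ) < x := lt_trans hu3 hxu
        rw [(hasDerivAt_hfun s x hx1).deriv]
        have hpos1 : (0:ℝ) < 1 + x := by linarith
        have h1 : 1 + x ≤ 1 + (1-s)*x := by nlinarith
        have h2 : 1 + (1-s)*x ≤ Real.exp ((1-s)*x) := by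
          linarith [Real.add_one_le_exp ((1-s)*x)]
        have h3 : Real.log (1+x) ≤ (1-s)*x := by
          rw [Real.log_le_iff_le_exp hpos1]
          linarith
        linarith
    have := anti (Set.mem_Icc.2 ⟨le_refl u, hneg.le⟩) (Set.mem_Icc.2 ⟨hneg.le, le_refl 0⟩) hneg.le
    linarith [h0 ▸ this]

private lemma perz {α w0 w1 B : ℝ} (hα : 0 < α) (hα2 : α ≤ 1/2)
    (hαB : α * B ≤ Real.sqrt α)
    (hw0 : 0 ≤ w0) (hw1 : 0 ≤ w1) (hB : w1/w0 ≤ B)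
    (hAC : w0 = 0 → w1 = 0) :
    (1 - Real.sqrt α) * (α^2/2) * ((w1 - w0)^2 / w0)
      ≤ (α*w1 + (1-α)*w0) * Real.log ((α*w1 + (1-α)*w0)/w0) - α*(w1 - w0) := by
  rcases eq_or_lt_of_le hw0 with h0 | h0
  · have h1 : w1 = 0 := hAC h0.symm
    simp [← h0, h1]
  · set s := Real.sqrt α with hs
    have hs0 : 0 < s := Real.sqrt_pos.2 hα
    have hs1 : s ≤ 1 := Real.sqrt_le_one.2 (by linarith)
    have hssq : s^2 = α := Real.sq_sqrt hα.le
    have hαs : α ≤ s := by nlinarith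
    set u := α*(w1 - w0)/w0 with hu
    have hu3 : (-1:ℝ) < u := by
      have h4 : 0 ≤ α * w1 / w0 := by positivity
      have h5 : u = α * w1 / w0 - α := by rw [hu]; field_simp
      rw [h5]; linarith
    have hu1 : -s ≤ u := by
      have h5 : u = α * w1 / w0 - α := by rw [hu]; field_simp
      have h4 : 0 ≤ α * w1 / w0 := by positivity
      rw [h5]; linarith
    have hu2 : u ≤ s := by
      have h5' : u = α * (w1/w0) - α := by rw [hu]; field_simp
      have h5 : u ≤ α * (w1/w0) := by rw [h5']; linarith
      have h6 : α * (w1/w0) ≤ α * B := by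
        apply mul_le_mul_of_nonneg_left hB hα.le
      linarith
    have key := keyineq hs0 hs1 hu1 hu2 hu3
    have e1 : (α*w1 + (1-α)*w0)/w0 = 1 + u := by
      rw [hu]; field_simp; ring
    have e2 : α*w1 + (1-α)*w0 = w0 * (1+u) := by
      rw [hu]; field_simp; ring
    have e3 : α*(w1 - w0) = w0 * u := by
      rw [hu]; field_simp
    have e4 : (1 - s) * (α^2/2) * ((w1 - w0)^2 / w0) = w0 * ((1-s) * (u^2/2)) := by
      rw [hu]; field_simp
    rw [e1, e2, e3, e4]
    calc w0 * ((1-s) * (u^2/2)) ≤ w0 * ((1+u) * Real.log (1+u) - u) :=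
          mul_le_mul_of_nonneg_left key hw0
      _ = w0 * (1+u) * Real.log (1+u) - w0 * u := by ring

private lemma perx {Z : Type*} [Fintype Z] {α B : ℝ} (w0 w1 : Z → ℝ)
    (hα : 0 < α) (hα2 : α ≤ 1/2) (hαB : α * B ≤ Real.sqrt α)
    (hw0 : IsPMF w0) (hw1 : IsPMF w1) (hB : ∀ z, w1 z / w0 z ≤ B)
    (hAC : AC w1 w0) :
    (1 - Real.sqrt α) * (α^2/2) * chi2 w1 w0
      ≤ KL (fun z => α * w1 z + (1 - α) * w0 z) w0 := by
  have hsum : ∑ z, ((α * w1 z + (1-α) * w0 z) * Real.log ((α * w1 z + (1-α) * w0 z)/w0 z)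
        - α * (w1 z - w0 z))
      = KL (fun z => α * w1 z + (1 - α) * w0 z) w0 := by
    rw [Finset.sum_sub_distrib]
    have h1 : ∑ z, α * (w1 z - w0 z) = 0 := by
      rw [← Finset.mul_sum, Finset.sum_sub_distrib, hw1.2, hw0.2]
      ring
    rw [h1, sub_zero]
    rfl
  rw [← hsum]
  have h2 : (1 - Real.sqrt α) * (α^2/2) * chi2 w1 w0
      = ∑ z, (1 - Real.sqrt α) * (α^2/2) * ((w1 z - w0 z)^2 / w0 z) := by
    rw [chi2, Finset.mul_sum]
  rw [h2]
  apply Finset.sum_le_sum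
  intro z _
  exact perz hα hα2 hαB (hw0.1 z) (hw1.1 z) (hB z) (hAC z)

/-- averaged form of the quadratic lower bound on the
mixture divergence, with a threshold on `α` uniform in the mixing pmf `P`. -/
theorem stmt15 {X2 Z : Type*} [Fintype X2] [Fintype Z]
    (W0 W1 : X2 → Z → ℝ)
    (hW0 : ∀ x, IsPMF (W0 x)) (hW1 : ∀ x, IsPMF (W1 x))
    (hAC : ∀ x, AC (W1 x) (W0 x)) :
    ∃ α₀ > (0:ℝ), ∀ α : ℝ, 0 < α → α ≤ α₀ → α ≤ 1 →
      ∀ P : X2 → ℝ, IsPMF P →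
        (1 - Real.sqrt α) * (α ^ 2 / 2) * ∑ x, P x * chi2 (W1 x) (W0 x)
          ≤ ∑ x, P x * KL (fun z => α * W1 x z + (1 - α) * W0 x z) (W0 x) := by
  obtain ⟨B, hBub⟩ := (Set.finite_range (fun p : X2 × Z => W1 p.1 p.2 / W0 p.1 p.2)).bddAbove
  set C := max B 1 with hC
  have hC1 : (1:ℝ) ≤ C := le_max_right _ _
  have hC0 : (0:ℝ) < C := lt_of_lt_of_le one_pos hC1
  have hratio : ∀ x z, W1 x z / W0 x z ≤ C := by
    intro x z
    exact le_trans (hBub (Set.mem_range_self (x, z))) (le_max_left _ _)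
  refine ⟨min (1/2) (1/C^2), lt_min (by norm_num) (by positivity), ?_⟩
  intro α hα hαle hα1 P hP
  have hα2 : α ≤ 1/2 := le_trans hαle (min_le_left _ _)
  have hαC : α ≤ 1/C^2 := le_trans hαle (min_le_right _ _)
  have hαB : α * C ≤ Real.sqrt α := by
    have hs : Real.sqrt α ≤ 1/C := by
      have h := Real.sqrt_le_sqrt hαC
      rw [show (1:ℝ)/C^2 = (1/C)^2 by ring,
        Real.sqrt_sq (by positivity : (0:ℝ) ≤ 1/C)] at h
      exact h
    have hssq : (Real.sqrt α)^2 = α := Real.sq_sqrt hα.le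
    have hsC : Real.sqrt α * C ≤ 1 := by
      have h := mul_le_mul_of_nonneg_right hs hC0.le
      rwa [one_div, inv_mul_cancel₀ (ne_of_gt hC0)] at h
    calc α * C = Real.sqrt α * (Real.sqrt α * C) := by
          rw [← mul_assoc, Real.mul_self_sqrt hα.le]
      _ ≤ Real.sqrt α * 1 := by
          apply mul_le_mul_of_nonneg_left hsC (Real.sqrt_nonneg α)
      _ = Real.sqrt α := mul_one _
  have hx : ∀ x, (1 - Real.sqrt α) * (α^2/2) * chi2 (W1 x) (W0 x)
      ≤ KL (fun z => α * W1 x z + (1 - α) * W0 x z) (W0 x) := by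
    intro x
    exact perx (W0 x) (W1 x) hα hα2 hαB (hW0 x) (hW1 x) (fun z => hratio x z) (hAC x)
  calc (1 - Real.sqrt α) * (α ^ 2 / 2) * ∑ x, P x * chi2 (W1 x) (W0 x)
      = ∑ x, P x * ((1 - Real.sqrt α) * (α^2/2) * chi2 (W1 x) (W0 x)) := by
        rw [Finset.mul_sum]; congr 1; ext x; ring
    _ ≤ ∑ x, P x * KL (fun z => α * W1 x z + (1 - α) * W0 x z) (W0 x) :=
        Finset.sum_le_sum fun x _ => mul_le_mul_of_nonneg_left (hx x) (hP.1 x)
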